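/- Let τ > 0 and let w: [T₁,T₂] → ℝ be a differentiable function satisfying w'(t) ≥ -τ·tanh(w(t) - r) for a constant r. Then for all t ∈ [T₁,T₂], sinh(w(t) - r) ≥ e^{-τ(t-T₁)}·sinh(w(T₁) - r); equivalently w(t) ≥ sinh⁻¹(e^{-τ(t-T₁)} sinh(w(T₁)-r)) + r. -/

import Mathlib

theorem stmt_11 (τ r T₁ T₂ : ℝ) (hτ : 0 < τ) (w w' : ℝ → ℝ)
    (hderiv : ∀ t ∈ Set.Icc T₁ T₂, HasDerivAt w (w' t) t)
    (hineq : ∀ t ∈ Set.Icc T₁ T₂, w' t ≥ -τ * Real.tanh (w t - r)) :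
    ∀ t ∈ Set.Icc T₁ T₂,
      Real.sinh (w t - r) ≥ Real.exp (-τ * (t - T₁)) * Real.sinh (w T₁ - r) ∧
      w t ≥ Real.arsinh (Real.exp (-τ * (t - T₁)) * Real.sinh (w T₁ - r)) + r := by
  set g : ℝ → ℝ := fun s => Real.exp (τ * (s - T₁)) * Real.sinh (w s - r) with hg
  have hgd : ∀ s ∈ Set.Icc T₁ T₂, HasDerivAt g
      (Real.exp (τ * (s - T₁)) * (τ * Real.sinh (w s - r) + Real.cosh (w s - r) * w' s)) s := by
    intro s hs
    have h1 : HasDerivAt (fun s => Real.exp (τ * (s - T₁))) (Real.exp (τ * (s - T₁)) * τ) s := by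
      have ht : HasDerivAt (fun s : ℝ => τ * (s - T₁)) τ s := by
        simpa using ((hasDerivAt_id s).sub_const T₁).const_mul τ
      simpa using ht.exp
    have h2 : HasDerivAt (fun s => Real.sinh (w s - r)) (Real.cosh (w s - r) * w' s) s := by
      have hw : HasDerivAt (fun s => w s - r) (w' s) s := (hderiv s hs).sub_const r
      exact (Real.hasDerivAt_sinh (w s - r)).comp s hw
    have : HasDerivAt g (Real.exp (τ * (s - T₁)) * τ * Real.sinh (w s - r) + Real.exp (τ * (s - T₁)) * (Real.cosh (w s - r) * w' s)) s := h1.mul h2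
    convert this using 1
    ring
  have hmono : MonotoneOn g (Set.Icc T₁ T₂) := by
    apply monotoneOn_of_deriv_nonneg (convex_Icc _ _)
    · exact fun s hs => (hgd s hs).continuousAt.continuousWithinAt
    · intro s hs
      rw [interior_Icc] at hs
      exact (hgd s (Set.Ioo_subset_Icc_self hs)).differentiableAt.differentiableWithinAt
    · intro s hs
      rw [interior_Icc] at hs
      have hs' := Set.Ioo_subset_Icc_self hs
      rw [(hgd s hs').deriv]
      have hc : 0 < Real.cosh (w s - r) := Real.cosh_pos _
      have hiq := hineq s hs'
      have key : 0 ≤ τ * Real.sinh (w s - r) + Real.cosh (w s - r) * w' s := by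
        have h3 : Real.cosh (w s - r) * w' s ≥ Real.cosh (w s - r) * (-τ * Real.tanh (w s - r)) :=
          mul_le_mul_of_nonneg_left hiq hc.le
        have h4 : Real.cosh (w s - r) * (-τ * Real.tanh (w s - r)) = -τ * Real.sinh (w s - r) := by
          rw [Real.tanh_eq_sinh_div_cosh]
          field_simp
        nlinarith
      positivity
  intro t ht
  have hT₁ : T₁ ∈ Set.Icc T₁ T₂ := Set.left_mem_Icc.2 (ht.1.trans ht.2)
  have hle : g T₁ ≤ g t := hmono hT₁ ht ht.1
  have h0 : g T₁ = Real.sinh (w T₁ - r) := by simp [hg]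
  have hA : Real.exp (-τ * (t - T₁)) * Real.exp (τ * (t - T₁)) = 1 := by
    rw [← Real.exp_add]
    norm_num
  have hEpos : (0:ℝ) < Real.exp (-τ * (t - T₁)) := Real.exp_pos _
  have h1 : Real.exp (-τ * (t - T₁)) * Real.sinh (w T₁ - r) ≤ Real.sinh (w t - r) := by
    have := mul_le_mul_of_nonneg_left hle hEpos.le
    rw [h0, hg] at this
    calc Real.exp (-τ * (t - T₁)) * Real.sinh (w T₁ - r)
        ≤ Real.exp (-τ * (t - T₁)) * (Real.exp (τ * (t - T₁)) * Real.sinh (w t - r)) := this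
      _ = (Real.exp (-τ * (t - T₁)) * Real.exp (τ * (t - T₁))) * Real.sinh (w t - r) := by ring
      _ = Real.sinh (w t - r) := by rw [hA]; ring
  refine ⟨h1, ?_⟩
  have h2 : Real.arsinh (Real.exp (-τ * (t - T₁)) * Real.sinh (w T₁ - r)) ≤ w t - r := by
    calc Real.arsinh (Real.exp (-τ * (t - T₁)) * Real.sinh (w T₁ - r))
        ≤ Real.arsinh (Real.sinh (w t - r)) := Real.arsinh_le_arsinh.2 h1
      _ = w t - r := Real.arsinh_sinh _
  linarith
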